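/- Let n be a nonempty finite index type and let A be an n × n matrix over the real numbers that is weakly chained diagonally dominant. Then A is nonsingular, i.e. det A ≠ 0. -/
import Mathlib


/-- A real square matrix that is weakly chained diagonally dominant is nonsingular. -/
theorem wcdd_nonsingular {n : Type*} [Fintype n] [DecidableEq n] [Nonempty n]
    (A : Matrix n n ℝ)
    (hweak : ∀ i : n, ∑ j ∈ Finset.univ.erase i, |A i j| ≤ |A i i|)
    (hchain : ∀ i : n, ∃ (r : ℕ) (c : ℕ → n), c 0 = i ∧
      (∀ m < r, A (c m) (c (m + 1)) ≠ 0) ∧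
      ∑ j ∈ Finset.univ.erase (c r), |A (c r) j| < |A (c r) (c r)|) :
    A.det ≠ 0 := by
  intro hdet
  obtain ⟨x, hx0, hAx⟩ := Matrix.exists_mulVec_eq_zero_iff.mpr hdet
  obtain ⟨i0, -, hi0⟩ := Finset.exists_max_image Finset.univ (fun i => |x i|)
    ⟨Classical.arbitrary n, Finset.mem_univ _⟩
  set M := |x i0| with hM
  have hMpos : 0 < M := by
    obtain ⟨j, hj⟩ := Function.ne_iff.mp hx0
    exact lt_of_lt_of_le (abs_pos.mpr hj) (hi0 j (Finset.mem_univ j))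
  have key : ∀ i, |x i| = M →
      ((∀ j, A i j ≠ 0 → |x j| = M) ∧
        ∑ j ∈ Finset.univ.erase i, |A i j| = |A i i|) := by
    intro i hiM
    have hsum : ∑ j, A i j * x j = 0 := by
      have := congr_fun hAx i
      simpa [Matrix.mulVec, dotProduct] using this
    have hrow : A i i * x i + ∑ j ∈ Finset.univ.erase i, A i j * x j = 0 := by
      rw [Finset.add_sum_erase Finset.univ (fun j => A i j * x j) (Finset.mem_univ i)]
      exact hsum
    have h1 : |A i i| * M ≤ ∑ j ∈ Finset.univ.erase i, |A i j| * |x j| := by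
      have hne : A i i * x i = -∑ j ∈ Finset.univ.erase i, A i j * x j := by linarith
      calc |A i i| * M = |A i i * x i| := by rw [abs_mul, hiM]
        _ = |∑ j ∈ Finset.univ.erase i, A i j * x j| := by rw [hne, abs_neg]
        _ ≤ ∑ j ∈ Finset.univ.erase i, |A i j * x j| := Finset.abs_sum_le_sum_abs _ _
        _ = ∑ j ∈ Finset.univ.erase i, |A i j| * |x j| := by simp [abs_mul]
    have h2 : ∑ j ∈ Finset.univ.erase i, |A i j| * |x j| ≤
        ∑ j ∈ Finset.univ.erase i, |A i j| * M :=
      Finset.sum_le_sum fun j _ =>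
        mul_le_mul_of_nonneg_left (hi0 j (Finset.mem_univ j)) (abs_nonneg _)
    have h3 : ∑ j ∈ Finset.univ.erase i, |A i j| * M ≤ |A i i| * M := by
      rw [← Finset.sum_mul]
      exact mul_le_mul_of_nonneg_right (hweak i) hMpos.le
    have e1 : ∑ j ∈ Finset.univ.erase i, |A i j| * |x j| =
        ∑ j ∈ Finset.univ.erase i, |A i j| * M := le_antisymm h2 (by linarith)
    have e2 : ∑ j ∈ Finset.univ.erase i, |A i j| = |A i i| := by
      have hmul : (∑ j ∈ Finset.univ.erase i, |A i j|) * M = |A i i| * M := by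
        rw [Finset.sum_mul]; linarith
      exact mul_right_cancel₀ hMpos.ne' hmul
    refine ⟨?_, e2⟩
    intro j hj
    by_cases hji : j = i
    · rw [hji]; exact hiM
    · have hzero : ∑ j ∈ Finset.univ.erase i, |A i j| * (M - |x j|) = 0 := by
        simp only [mul_sub]
        rw [Finset.sum_sub_distrib]
        linarith
      have heach := (Finset.sum_eq_zero_iff_of_nonneg (fun k _ =>
        mul_nonneg (abs_nonneg _) (sub_nonneg.mpr (hi0 k (Finset.mem_univ k))))).mp hzero
      have := heach j (Finset.mem_erase.mpr ⟨hji, Finset.mem_univ j⟩)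
      rcases mul_eq_zero.mp this with h | h
      · exact absurd (abs_eq_zero.mp h) hj
      · linarith [sub_eq_zero.mp h]
  obtain ⟨r, c, hc0, hcne, hcs⟩ := hchain i0
  have hall : ∀ m ≤ r, |x (c m)| = M := by
    intro m
    induction m with
    | zero => intro _; rw [hc0]
    | succ k ih =>
      intro hk
      exact (key (c k) (ih (Nat.le_of_succ_le hk))).1 (c (k + 1))
        (hcne k (Nat.lt_of_succ_le hk))
  have := (key (c r) (hall r le_rfl)).2
  linarith
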